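/- arXiv:1201.4895 — 5 statements merged into one kernel-verified Lean document; each statement's English description precedes it below -/
import Mathlib

section
/- Let F be a field, d a positive natural number, C a p × d matrix over F and A a d × d matrix over F. Then the observability matrix O(C,A) has rank d if and only if the only vector x ∈ F^d satisfying C A^k x = 0 for every natural number k is x = 0 (equivalently, the linear map sending x to the sequence (C A^k x)_{k ∈ ℕ} is injective). -/
open Matrix

/-- The observability matrix `O(C, A)`: the `(p·d) × d` block matrix obtained by stacking
`C, C*A, C*A^2, …, C*A^(d-1)` vertically. Row `(k, i)` is row `i` of `C * A^k`. -/
def obsMat {F : Type*} [Field F] {p d : ℕ} (C : Matrix (Fin p) (Fin d) F)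
    (A : Matrix (Fin d) (Fin d) F) : Matrix (Fin d × Fin p) (Fin d) F :=
  Matrix.of fun ki j => (C * A ^ (ki.1 : ℕ)) ki.2 j

lemma obs_ext_all {F : Type*} [Field F] {p d : ℕ} (hd : 0 < d)
    (C : Matrix (Fin p) (Fin d) F) (A : Matrix (Fin d) (Fin d) F) (x : Fin d → F)
    (h : ∀ k < d, (C * A ^ k).mulVec x = 0) : ∀ k : ℕ, (C * A ^ k).mulVec x = 0 := by
  have hAd : A ^ d = ∑ i ∈ Finset.range d, (-(A.charpoly.coeff i)) • A ^ i := by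
    have h0 := A.aeval_self_charpoly
    rw [Polynomial.aeval_eq_sum_range] at h0
    simp only [A.charpoly_natDegree_eq_dim, Fintype.card_fin] at h0
    rw [Finset.sum_range_succ,
      show A.charpoly.coeff d = 1 by
        simpa [A.charpoly_natDegree_eq_dim] using A.charpoly_monic.coeff_natDegree] at h0
    simp only [one_smul] at h0
    have hneg : A ^ d = -∑ i ∈ Finset.range d, A.charpoly.coeff i • A ^ i :=
      eq_neg_of_add_eq_zero_left ((add_comm _ _).trans h0)
    rw [hneg, ← Finset.sum_neg_distrib]
    exact Finset.sum_congr rfl fun i _ => (neg_smul _ _).symm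
  intro k
  induction k using Nat.strong_induction_on with
  | _ k ih =>
    by_cases hk : k < d
    · exact h k hk
    · push_neg at hk
      have hpow : A ^ k = ∑ i ∈ Finset.range d,
          (-(A.charpoly.coeff i)) • A ^ (i + (k - d)) := by
        have : A ^ k = A ^ d * A ^ (k - d) := by
          rw [← pow_add]; congr 1; omega
        rw [this, hAd, Finset.sum_mul]
        exact Finset.sum_congr rfl fun i _ => by rw [smul_mul_assoc, ← pow_add]
      rw [hpow, Matrix.mul_sum]
      rw [show (∑ i ∈ Finset.range d, C * ((-(A.charpoly.coeff i)) • A ^ (i + (k - d)))) =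
          ∑ i ∈ Finset.range d, (-(A.charpoly.coeff i)) • (C * A ^ (i + (k - d))) from
        Finset.sum_congr rfl fun i _ => by rw [Matrix.mul_smul]]
      rw [show (∑ i ∈ Finset.range d, (-(A.charpoly.coeff i)) • (C * A ^ (i + (k - d)))) *ᵥ x
          = ∑ i ∈ Finset.range d, ((-(A.charpoly.coeff i)) • (C * A ^ (i + (k - d)))) *ᵥ x from by
        induction (Finset.range d) using Finset.induction_on with
        | empty => simp
        | insert _ _ hni ihs =>
            rw [Finset.sum_insert hni, Finset.sum_insert hni, Matrix.add_mulVec, ihs]]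
      refine Finset.sum_eq_zero fun i hi => ?_
      rw [Matrix.smul_mulVec, ih (i + (k - d)) (by
        have := Finset.mem_range.mp hi; omega)]
      simp

theorem stmt0 {F : Type*} [Field F] {p d : ℕ} (hd : 0 < d)
    (C : Matrix (Fin p) (Fin d) F) (A : Matrix (Fin d) (Fin d) F) :
    (obsMat C A).rank = d ↔
      ∀ x : Fin d → F, (∀ k : ℕ, (C * A ^ k).mulVec x = 0) → x = 0 := by
  have hrn := LinearMap.finrank_range_add_finrank_ker (obsMat C A).mulVecLin
  rw [Module.finrank_pi] at hrn
  simp only [Fintype.card_fin] at hrn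
  have hrank : (obsMat C A).rank = Module.finrank F (LinearMap.range (obsMat C A).mulVecLin) :=
    rfl
  have hker : (obsMat C A).rank = d ↔
      ∀ x : Fin d → F, (obsMat C A).mulVec x = 0 → x = 0 := by
    rw [hrank]
    constructor
    · intro hr x hx
      have hk0 : Module.finrank F (LinearMap.ker (obsMat C A).mulVecLin) = 0 := by omega
      have : LinearMap.ker (obsMat C A).mulVecLin = ⊥ :=
        Submodule.finrank_eq_zero.mp hk0
      have hx' : x ∈ LinearMap.ker (obsMat C A).mulVecLin := by
        simpa [LinearMap.mem_ker] using hx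
      simpa [this] using hx'
    · intro hinj
      have : LinearMap.ker (obsMat C A).mulVecLin = ⊥ := by
        rw [LinearMap.ker_eq_bot']
        intro x hx
        exact hinj x (by simpa using hx)
      rw [this] at hrn
      simpa using hrn
  rw [hker]
  constructor
  · intro h x hx
    refine h x (funext fun ki => ?_)
    simpa [obsMat, Matrix.mulVec, dotProduct] using
      congrFun (hx (ki.1 : ℕ)) ki.2
  · intro h x hx
    refine h x (obs_ext_all hd C A x (fun k hk => ?_))
    refine funext fun j => ?_
    simpa [obsMat, Matrix.mulVec, dotProduct] using congrFun hx (⟨k, hk⟩, j)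
end

section
/- Let C be an N × d real matrix with rank(C) = d, let m ≥ d, and let γ be the product measure on the space of m × N real matrices (functions Fin m → Fin N → ℝ) whose factors are each the standard Gaussian measure on ℝ (gaussianReal 0 1), so that the entries of a random matrix Φ are i.i.d. standard Gaussians. Then for γ-almost every Φ, rank(Φ C) = d. -/
open MeasureTheory ProbabilityTheory Matrix


theorem polyA : ∀ (n : ℕ) (μ : Fin n → Measure ℝ),
    (∀ i, IsProbabilityMeasure (μ i)) → (∀ i, μ i ≪ volume) →
    ∀ (p : MvPolynomial (Fin n) ℝ), p ≠ 0 →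
    Measure.pi μ {x | MvPolynomial.eval x p = 0} = 0 := by
  intro n
  induction n with
  | zero =>
    intro μ _ _ p hp
    convert measure_empty (μ := Measure.pi μ)
    rw [Set.eq_empty_iff_forall_notMem]
    intro x hx
    apply hp
    rw [MvPolynomial.eq_C_of_isEmpty p] at hx ⊢
    simp only [Set.mem_setOf_eq, MvPolynomial.eval_C] at hx
    rw [hx, map_zero]
  | succ n ih =>
    intro μ hprob hac p hp
    haveI := hprob
    haveI : ∀ i : Fin n, IsProbabilityMeasure (μ i.succ) := fun i => hprob _
    set f := MvPolynomial.finSuccEquiv ℝ n p with hf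
    have hf0 : f ≠ 0 := by
      rw [hf]
      simpa using hp
    have hq0 : f.leadingCoeff ≠ 0 := Polynomial.leadingCoeff_ne_zero.mpr hf0
    set t : Set (ℝ × (Fin n → ℝ)) :=
      {z | MvPolynomial.eval (Fin.cons z.1 z.2) p = 0} with ht
    have htm : MeasurableSet t := by
      have hcons : Continuous fun z : ℝ × (Fin n → ℝ) =>
          (Fin.cons z.1 z.2 : Fin (n+1) → ℝ) := by
        apply continuous_pi
        intro i
        refine Fin.cases ?_ ?_ i
        · simpa using continuous_fst
        · intro j
          have hj : Continuous fun z : ℝ × (Fin n → ℝ) => z.2 j := (continuous_apply j).comp continuous_snd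
          simpa using hj
      have hc : Continuous fun z : ℝ × (Fin n → ℝ) =>
          MvPolynomial.eval (Fin.cons z.1 z.2 : Fin (n+1) → ℝ) p :=
        (MvPolynomial.continuous_eval p).comp hcons
      exact (isClosed_singleton.preimage hc).measurableSet
    have hmp := measurePreserving_piFinSuccAbove μ (0 : Fin (n+1))
    have hpre : (MeasurableEquiv.piFinSuccAbove (fun _ : Fin (n+1) => ℝ) 0) ⁻¹' t
        = {x | MvPolynomial.eval x p = 0} := by
      ext x
      have hx : (Fin.cons (x 0) (Fin.removeNth 0 x) : Fin (n+1) → ℝ) = x := by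
        funext i
        refine Fin.cases ?_ ?_ i
        · simp
        · intro j; simp [Fin.removeNth, Fin.tail]
      simp only [Set.mem_preimage, MeasurableEquiv.piFinSuccAbove_apply, ht,
        Set.mem_setOf_eq, Fin.insertNthEquiv, Equiv.coe_fn_symm_mk, Fin.removeNth,
        Fin.succAbove_zero]
      rw [hx]
    have key : ((μ 0).prod (Measure.pi fun i : Fin n => μ ((0 : Fin (n+1)).succAbove i))) t = 0 := by
      have hswap : ((μ 0).prod (Measure.pi fun i : Fin n => μ ((0:Fin (n+1)).succAbove i))) t
          = ((Measure.pi fun i : Fin n => μ ((0:Fin (n+1)).succAbove i)).prod (μ 0))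
            (Prod.swap ⁻¹' t) := by
        rw [← Measure.prod_swap, Measure.map_apply measurable_swap htm]
      rw [hswap, Measure.measure_prod_null (measurable_swap htm)]
      have hIH : (Measure.pi fun i : Fin n => μ ((0:Fin (n+1)).succAbove i))
          {s | MvPolynomial.eval s f.leadingCoeff = 0} = 0 :=
        ih _ (fun i => hprob _) (fun i => hac _) _ hq0
      have hae : ∀ᵐ s ∂(Measure.pi fun i : Fin n => μ ((0:Fin (n+1)).succAbove i)),
          MvPolynomial.eval s f.leadingCoeff ≠ 0 := by
        rw [ae_iff]
        simpa using hIH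
      filter_upwards [hae] with s hs
      have hg0 : f.map (MvPolynomial.eval s) ≠ 0 := by
        intro h
        apply hs
        have h2 := congrArg (fun g => Polynomial.coeff g f.natDegree) h
        simp only [Polynomial.coeff_map, Polynomial.coeff_zero] at h2
        rw [Polynomial.leadingCoeff]
        exact h2
      have hfin : {y : ℝ | (Prod.mk s ⁻¹' (Prod.swap ⁻¹' t)) y}.Finite := by
        have : (Prod.mk s ⁻¹' (Prod.swap ⁻¹' t))
            = {y : ℝ | Polynomial.IsRoot (f.map (MvPolynomial.eval s)) y} := by
          ext y
          simp only [Set.mem_preimage, Prod.swap_prod_mk, ht, Set.mem_setOf_eq,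
            Polynomial.IsRoot]
          rw [MvPolynomial.eval_eq_eval_mv_eval' s y p]
        rw [this]
        exact Polynomial.finite_setOf_isRoot hg0
      exact hac 0 (hfin.countable.measure_zero volume)
    calc Measure.pi μ {x | MvPolynomial.eval x p = 0}
        = Measure.pi μ ((MeasurableEquiv.piFinSuccAbove (fun _ : Fin (n+1) => ℝ) 0) ⁻¹' t) := by
          rw [hpre]
      _ = ((μ 0).prod (Measure.pi fun i : Fin n => μ ((0:Fin (n+1)).succAbove i))) t :=
          hmp.measure_preimage htm.nullMeasurableSet
      _ = 0 := key

theorem polyB {ι : Type*} [Fintype ι] (μ : ι → Measure ℝ)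
    (hprob : ∀ i, IsProbabilityMeasure (μ i)) (hac : ∀ i, μ i ≪ volume)
    (p : MvPolynomial ι ℝ) (hp : p ≠ 0) :
    Measure.pi μ {x | MvPolynomial.eval x p = 0} = 0 := by
  haveI := hprob
  set n := Fintype.card ι with hn
  set e : Fin n ≃ ι := (Fintype.equivFin ι).symm with he
  set h : (Fin n → ℝ) → (ι → ℝ) := fun y i => y (e.symm i) with hh
  have hmeas : Measurable h := by
    rw [hh]
    exact measurable_pi_iff.mpr fun i => measurable_pi_apply _
  haveI : ∀ k : Fin n, IsProbabilityMeasure (μ (e k)) := fun k => hprob _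
  have hmp : MeasurePreserving h (Measure.pi fun k => μ (e k)) (Measure.pi μ) := by
    refine ⟨hmeas, ?_⟩
    refine (Measure.pi_eq fun s hs => ?_).symm
    rw [Measure.map_apply hmeas (MeasurableSet.univ_pi hs)]
    have hpre : h ⁻¹' Set.pi Set.univ s = Set.pi Set.univ (fun k => s (e k)) := by
      ext y
      simp only [Set.mem_preimage, Set.mem_pi, Set.mem_univ, true_implies, hh]
      constructor
      · intro hy k
        simpa using hy (e k)
      · intro hy i
        simpa using hy (e.symm i)
    rw [hpre, Measure.pi_pi]
    exact Equiv.prod_comp e (fun i => μ i (s i))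
  have hSm : MeasurableSet {x : ι → ℝ | MvPolynomial.eval x p = 0} :=
    (isClosed_singleton.preimage (MvPolynomial.continuous_eval p)).measurableSet
  rw [← hmp.measure_preimage hSm.nullMeasurableSet]
  have hpre2 : h ⁻¹' {x : ι → ℝ | MvPolynomial.eval x p = 0}
      = {y : Fin n → ℝ | MvPolynomial.eval y (MvPolynomial.rename e.symm p) = 0} := by
    ext y
    simp only [Set.mem_preimage, Set.mem_setOf_eq, MvPolynomial.eval_rename, hh]
    rfl
  rw [hpre2]
  refine polyA n _ (fun k => hprob _) (fun k => hac _) _ ?_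
  intro h0
  exact hp ((MvPolynomial.rename_injective _ e.symm.injective).eq_iff.mp
    (by rw [h0, map_zero]))


theorem det_gram_ne_zero {k d : ℕ} {B : Matrix (Fin k) (Fin d) ℝ} (hB : B.rank = d) :
    (Bᵀ * B).det ≠ 0 := by
  have hrn := LinearMap.finrank_range_add_finrank_ker B.mulVecLin
  rw [Matrix.rank] at hB
  rw [hB] at hrn
  have hdom : Module.finrank ℝ (Fin d → ℝ) = d := by simp
  rw [hdom] at hrn
  have hker0 : Module.finrank ℝ (LinearMap.ker B.mulVecLin) = 0 := by omega
  have hker : LinearMap.ker B.mulVecLin = ⊥ := Submodule.finrank_eq_zero.mp hker0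
  have hkerG : LinearMap.ker (Bᵀ * B).mulVecLin = ⊥ := by
    rw [Matrix.ker_mulVecLin_transpose_mul_self]; exact hker
  have hinj : Function.Injective (Bᵀ * B).mulVec := by
    have := LinearMap.ker_eq_bot.mp hkerG
    exact this
  have hunit : IsUnit (Bᵀ * B) := (Matrix.mulVec_injective_iff_isUnit).mp hinj
  exact ((Matrix.isUnit_iff_isUnit_det _).mp hunit).ne_zero

theorem rank_eq_of_det_gram {k d : ℕ} {B : Matrix (Fin k) (Fin d) ℝ}
    (h : (Bᵀ * B).det ≠ 0) : B.rank = d := by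
  have hunit : IsUnit (Bᵀ * B) := (Matrix.isUnit_iff_isUnit_det _).mpr (isUnit_iff_ne_zero.mpr h)
  have := Matrix.rank_of_isUnit _ hunit
  rw [Matrix.rank_transpose_mul_self] at this
  simpa using this

theorem exists_good {m N d : ℕ} (C : Matrix (Fin N) (Fin d) ℝ) (hC : C.rank = d)
    (hm : d ≤ m) : ∃ Φ₀ : Matrix (Fin m) (Fin N) ℝ, (Φ₀ * C).rank = d := by
  set E : Matrix (Fin m) (Fin d) ℝ :=
    Matrix.of fun i j => if (i : ℕ) = (j : ℕ) then 1 else 0 with hE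
  have hEtE : Eᵀ * E = 1 := by
    ext a b
    simp only [Matrix.mul_apply, Matrix.transpose_apply, hE, Matrix.of_apply]
    have hcond : ∀ i : Fin m, ((i : ℕ) = (a : ℕ)) = (i = Fin.castLE hm a) := by
      intro i
      apply propext
      rw [Fin.ext_iff]
      simp
    simp_rw [hcond, ite_mul, one_mul, zero_mul]
    rw [Finset.sum_ite_eq' Finset.univ (Fin.castLE hm a)
      (fun i => if (i : ℕ) = (b : ℕ) then (1:ℝ) else 0)]
    simp [Matrix.one_apply, Fin.ext_iff]
  have hrankE : E.rank = d := by
    have := Matrix.rank_transpose_mul_self E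
    rw [hEtE, Matrix.rank_one] at this
    simpa using this.symm
  have hCu : IsUnit (Cᵀ * C).det := isUnit_iff_ne_zero.mpr (det_gram_ne_zero hC)
  refine ⟨E * Cᵀ, ?_⟩
  rw [Matrix.mul_assoc]
  rw [Matrix.rank_mul_eq_left_of_isUnit_det _ _ hCu]
  exact hrankE




theorem stmt7 {m N d : ℕ} (C : Matrix (Fin N) (Fin d) ℝ) (hC : C.rank = d)
    (hm : d ≤ m) :
    ∀ᵐ Φ ∂(Measure.pi fun _ : Fin m => Measure.pi fun _ : Fin N => gaussianReal 0 1),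
      (Matrix.of Φ * C).rank = d := by
  set γ : Measure (Fin m → Fin N → ℝ) :=
    Measure.pi fun _ : Fin m => Measure.pi fun _ : Fin N => gaussianReal 0 1 with hγ
  set π : Measure (Fin m × Fin N → ℝ) :=
    Measure.pi fun _ : Fin m × Fin N => gaussianReal 0 1 with hπ
  set G : (Fin m → Fin N → ℝ) → (Fin m × Fin N → ℝ) := fun x p => x p.1 p.2 with hG
  have hGmeas : Measurable G :=
    measurable_pi_iff.mpr fun p => (measurable_pi_apply p.2).comp (measurable_pi_apply p.1)
  have hmp : MeasurePreserving G γ π := by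
    refine ⟨hGmeas, ?_⟩
    refine (Measure.pi_eq fun s hs => ?_).symm
    rw [Measure.map_apply hGmeas (MeasurableSet.univ_pi hs)]
    have hpre : G ⁻¹' Set.pi Set.univ s
        = Set.pi Set.univ fun i : Fin m => Set.pi Set.univ fun j : Fin N => s (i, j) := by
      ext x
      simp only [Set.mem_preimage, Set.mem_pi, Set.mem_univ, true_implies, hG]
      exact ⟨fun h i j => h (i, j), fun h p => h p.1 p.2⟩
    rw [hpre, hγ, Measure.pi_pi]
    simp_rw [Measure.pi_pi]
    rw [Fintype.prod_prod_type]
  -- the polynomial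
  set Xm : Matrix (Fin m) (Fin N) (MvPolynomial (Fin m × Fin N) ℝ) :=
    Matrix.of fun i j => MvPolynomial.X (i, j) with hXm
  set Cp : Matrix (Fin N) (Fin d) (MvPolynomial (Fin m × Fin N) ℝ) :=
    C.map MvPolynomial.C with hCp
  set P : MvPolynomial (Fin m × Fin N) ℝ := ((Xm * Cp)ᵀ * (Xm * Cp)).det with hP
  have heval : ∀ x : Fin m × Fin N → ℝ,
      MvPolynomial.eval x P
        = (((Matrix.of fun i j => x (i, j)) * C)ᵀ * ((Matrix.of fun i j => x (i, j)) * C)).det := by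
    intro x
    have hmX : Xm.map (MvPolynomial.eval x) = Matrix.of fun i j => x (i, j) := by
      ext i j
      simp [hXm]
    have hmC : Cp.map (MvPolynomial.eval x) = C := by
      ext i j
      simp [hCp]
    rw [hP, RingHom.map_det, RingHom.mapMatrix_apply, Matrix.map_mul, Matrix.transpose_map, Matrix.map_mul, hmX, hmC]
  have hP0 : P ≠ 0 := by
    obtain ⟨Φ₀, hΦ₀⟩ := exists_good C hC hm
    intro h0
    have := heval fun p => Φ₀ p.1 p.2
    rw [h0, map_zero] at this
    have hofeq : (Matrix.of fun i j => Φ₀ (i, j).1 (i, j).2) = Φ₀ := rfl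
    rw [hofeq] at this
    exact det_gram_ne_zero hΦ₀ this.symm
  -- null set
  have hnull : π {x : Fin m × Fin N → ℝ | MvPolynomial.eval x P = 0} = 0 :=
    polyB _ (fun _ => inferInstance)
      (fun _ => gaussianReal_absolutelyContinuous 0 one_ne_zero) P hP0
  have hSm : MeasurableSet {x : Fin m × Fin N → ℝ | MvPolynomial.eval x P = 0} :=
    (isClosed_singleton.preimage (MvPolynomial.continuous_eval P)).measurableSet
  have hγnull : γ (G ⁻¹' {x : Fin m × Fin N → ℝ | MvPolynomial.eval x P = 0}) = 0 := by
    rw [hmp.measure_preimage hSm.nullMeasurableSet]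
    exact hnull
  rw [ae_iff]
  refine measure_mono_null ?_ hγnull
  intro Φ hΦ
  simp only [Set.mem_setOf_eq] at hΦ
  simp only [Set.mem_preimage, Set.mem_setOf_eq]
  by_contra hne
  apply hΦ
  apply rank_eq_of_det_gram (B := Matrix.of Φ * C)
  have := heval (G Φ)
  have hofeq : (Matrix.of fun i j => G Φ (i, j)) = Matrix.of Φ := rfl
  rw [hofeq] at this
  rw [← this]
  exact hne
end

section
/- Let F be a field, d a positive natural number, and B a d × d matrix over F that is diagonalizable as B = Q Λ Q⁻¹, where Q is an invertible d × d matrix and Λ is the diagonal matrix with diagonal entries λ_0, …, λ_{d−1}. For any vector c ∈ F^d, writing e = Q⁻¹ c, the Krylov matrix K(B, c) satisfies the factorization K(B, c) = Q · diag(e) · V(λ), where diag(e) is the diagonal matrix with diagonal entries e_0, …, e_{d−1} and V(λ) is the Vandermonde matrix with entries V(λ)_{i,j} = λ_i^j for 0 ≤ i, j ≤ d−1. -/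
open Matrix

/-- The Krylov matrix `K(B, c) = [c | Bc | B²c | ⋯ | B^(d−1)c]`: the `d × d` matrix whose
`j`-th column is `B^j c`. -/
def krylov {F : Type*} [Field F] {d : ℕ} (B : Matrix (Fin d) (Fin d) F) (c : Fin d → F) :
    Matrix (Fin d) (Fin d) F :=
  Matrix.of fun i j => (B ^ (j : ℕ)).mulVec c i

theorem stmt8 {F : Type*} [Field F] {d : ℕ} (hd : 0 < d)
    (B Q : Matrix (Fin d) (Fin d) F) (lam : Fin d → F) (hQ : IsUnit Q)
    (hB : B = Q * Matrix.diagonal lam * Q⁻¹) (c : Fin d → F) (e : Fin d → F)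
    (he : e = Q⁻¹.mulVec c) :
    krylov B c = Q * Matrix.diagonal e * Matrix.vandermonde lam := by
  have hpow : ∀ n : ℕ, B ^ n = Q * (Matrix.diagonal lam) ^ n * Q⁻¹ := by
    intro n
    induction n with
    | zero => simp [Matrix.mul_nonsing_inv Q ((Matrix.isUnit_iff_isUnit_det Q).mp hQ)]
    | succ n ih =>
        rw [pow_succ, pow_succ, ih, hB]
        have hQQ : Q⁻¹ * Q = 1 :=
          Matrix.nonsing_inv_mul Q ((Matrix.isUnit_iff_isUnit_det Q).mp hQ)
        rw [show Q * Matrix.diagonal lam ^ n * Q⁻¹ * (Q * Matrix.diagonal lam * Q⁻¹)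
            = Q * Matrix.diagonal lam ^ n * (Q⁻¹ * Q) * Matrix.diagonal lam * Q⁻¹ by
          noncomm_ring, hQQ, mul_one]
        noncomm_ring
  ext i j
  rw [krylov, Matrix.of_apply, hpow j, he]
  simp only [Matrix.mul_apply, Matrix.mulVec, Matrix.diagonal_pow, Matrix.diagonal_apply,
    Matrix.vandermonde_apply, dotProduct]
  simp only [mul_ite, ite_mul, mul_zero, zero_mul, Finset.sum_ite_eq, Finset.sum_ite_eq',
    Finset.mem_univ, if_true, Finset.mul_sum, Finset.sum_mul]
  rw [Finset.sum_comm]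
  apply Finset.sum_congr rfl; intro k _
  apply Finset.sum_congr rfl; intro l _
  simp only [Pi.pow_apply]
  ring
end

section
/- Let F be a field, d a positive natural number, and B a d × d matrix over F that is diagonalizable as B = Q Λ Q⁻¹, where Q is an invertible d × d matrix and Λ is the diagonal matrix with pairwise distinct diagonal entries λ_0, …, λ_{d−1}. Let c ∈ F^d be a vector such that every entry of e = Q⁻¹ c is nonzero. Then the Krylov matrix K(B, c) = [c | Bc | B²c | ⋯ | B^{d−1}c] is invertible. -/
open Matrix

theorem stmt10 {F : Type*} [Field F] {d : ℕ} (hd : 0 < d)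
    (B Q : Matrix (Fin d) (Fin d) F) (lam : Fin d → F) (hQ : IsUnit Q)
    (hB : B = Q * Matrix.diagonal lam * Q⁻¹) (hlam : Function.Injective lam)
    (c : Fin d → F) (he : ∀ i, Q⁻¹.mulVec c i ≠ 0) :
    IsUnit (krylov B c) := by
  have hQd : IsUnit Q.det := (Matrix.isUnit_iff_isUnit_det Q).mp hQ
  have hQQ : Q * Q⁻¹ = 1 := Matrix.mul_nonsing_inv Q hQd
  have hpow : ∀ j : ℕ, B ^ j = Q * (Matrix.diagonal lam) ^ j * Q⁻¹ := by
    intro j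
    induction j with
    | zero => simp [hQQ]
    | succ n ih =>
      rw [pow_succ, ih, hB, pow_succ]
      have hQ'Q : Q⁻¹ * Q = 1 := Matrix.nonsing_inv_mul Q hQd
      rw [show Q * Matrix.diagonal lam ^ n * Q⁻¹ * (Q * Matrix.diagonal lam * Q⁻¹)
          = Q * Matrix.diagonal lam ^ n * (Q⁻¹ * Q) * Matrix.diagonal lam * Q⁻¹ by
        noncomm_ring]
      rw [hQ'Q]
      noncomm_ring
  have hK : krylov B c
      = Q * (Matrix.diagonal (Q⁻¹.mulVec c) * Matrix.vandermonde lam) := by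
    ext i j
    rw [show krylov B c i j = (B ^ (j:ℕ)).mulVec c i from rfl, hpow j,
      Matrix.diagonal_pow, ← Matrix.mulVec_mulVec, ← Matrix.mulVec_mulVec,
      Matrix.mulVec, dotProduct, Matrix.mul_apply]
    refine Finset.sum_congr rfl fun k _ => ?_
    rw [Matrix.mulVec_diagonal, Matrix.diagonal_mul, Matrix.vandermonde_apply, Pi.pow_apply]
    ring
  rw [hK]
  refine hQ.mul ?_
  rw [Matrix.isUnit_iff_isUnit_det, Matrix.det_mul, Matrix.det_diagonal,
    Matrix.det_vandermonde, isUnit_iff_ne_zero]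
  refine mul_ne_zero (Finset.prod_ne_zero_iff.mpr fun i _ => he i) ?_
  refine Finset.prod_ne_zero_iff.mpr fun i _ => Finset.prod_ne_zero_iff.mpr fun j hj => ?_
  exact sub_ne_zero.mpr fun h => absurd (hlam h) (ne_of_gt (Finset.mem_Ioi.mp hj))
end

section
/- Let d ≤ N be positive natural numbers, let A be a d × d real matrix whose transpose is diagonalizable as Aᵀ = Q Λ Q⁻¹ with Q an invertible real d × d matrix and Λ the diagonal matrix with pairwise distinct diagonal entries λ_0, …, λ_{d−1}, and let C be an N × d real matrix with rank(C) = d. Let γ_N be the product measure on ℝ^N (functions Fin N → ℝ) of N copies of the standard Gaussian measure on ℝ (gaussianReal 0 1). Then for γ_N-almost every φ ∈ ℝ^N, the d × d observability matrix O(φᵀ C, A), whose k-th row (k = 0, …, d−1) is the row vector φᵀ C A^k, is invertible. (This is the paper's Theorem stating that with one common measurement per frame the state sequence is observable.) -/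
open MeasureTheory ProbabilityTheory Matrix

private lemma gauss_poly_null : ∀ (n : ℕ) (P : MvPolynomial (Fin n) ℝ), P ≠ 0 →
    (Measure.pi fun _ : Fin n => gaussianReal 0 1) {x | MvPolynomial.eval x P = 0} = 0 := by
  intro n
  induction n with
  | zero =>
    intro P hP
    have : {x : Fin 0 → ℝ | MvPolynomial.eval x P = 0} = ∅ := by
      ext x
      simp only [Set.mem_setOf_eq, Set.mem_empty_iff_false, iff_false]
      rw [MvPolynomial.eq_C_of_isEmpty P]
      simp only [MvPolynomial.eval_C]
      intro h
      apply hP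
      rw [MvPolynomial.eq_C_of_isEmpty P, h, map_zero]
    rw [this]; simp
  | succ n ih =>
    intro P hP
    set μ₀ : Measure ℝ := gaussianReal 0 1 with hμ₀
    set ν : Measure (Fin n → ℝ) := Measure.pi fun _ : Fin n => gaussianReal 0 1 with hν
    set q := MvPolynomial.finSuccEquiv ℝ n P with hqdef
    have hq : q ≠ 0 := by
      rw [hqdef]
      intro h
      exact hP (by simpa using congrArg (MvPolynomial.finSuccEquiv ℝ n).symm h)
    have hl : q.leadingCoeff ≠ 0 := Polynomial.leadingCoeff_ne_zero.mpr hq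
    -- the equivalence
    have hmp := measurePreserving_piFinSuccAbove (fun _ : Fin (n+1) => (gaussianReal 0 1 : Measure ℝ)) 0
    set T : Set (ℝ × (Fin n → ℝ)) :=
      {p | MvPolynomial.eval (Fin.cons p.1 p.2) P = 0} with hT
    have hTm : MeasurableSet T := by
      have hcont : Continuous fun p : ℝ × (Fin n → ℝ) =>
          MvPolynomial.eval (Fin.cons p.1 p.2) P := by
        apply (MvPolynomial.continuous_eval P).comp
        apply continuous_pi
        intro i
        refine Fin.cases ?_ ?_ i
        · exact continuous_fst
        · intro j
          simpa [Function.comp_def] using (continuous_apply j).comp continuous_snd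
      exact hcont.measurable (measurableSet_singleton 0)
    have hpre : (⇑(MeasurableEquiv.piFinSuccAbove (fun _ : Fin (n+1) => ℝ) 0)) ⁻¹' T
        = {x : Fin (n+1) → ℝ | MvPolynomial.eval x P = 0} := by
      ext x
      simp only [Set.mem_preimage, hT, Set.mem_setOf_eq,
        MeasurableEquiv.piFinSuccAbove_apply]
      set p := (Fin.insertNthEquiv (fun _ : Fin (n+1) => ℝ) 0).symm x with hp
      have hx : Fin.insertNth (0 : Fin (n+1)) p.1 p.2 = x :=
        (Fin.insertNthEquiv (fun _ : Fin (n+1) => ℝ) 0).apply_symm_apply x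
      rw [Fin.insertNth_zero] at hx
      rw [show (Fin.cons p.1 p.2 : Fin (n+1) → ℝ) = x from hx]
    have key : (Measure.pi fun _ : Fin (n+1) => gaussianReal 0 1)
        {x : Fin (n+1) → ℝ | MvPolynomial.eval x P = 0} = (μ₀.prod ν) T := by
      rw [← hpre]
      exact hmp.measure_preimage hTm.nullMeasurableSet
    rw [key]
    -- swap the product
    have hswapm : MeasurableSet (Prod.swap ⁻¹' T : Set ((Fin n → ℝ) × ℝ)) :=
      hTm.preimage measurable_swap
    have hswap : (μ₀.prod ν) T = (ν.prod μ₀) (Prod.swap ⁻¹' T) := by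
      rw [← Measure.prod_swap, Measure.map_apply measurable_swap hTm]
    rw [hswap]
    rw [Measure.measure_prod_null hswapm]
    -- a.e. x, the section is null
    have hae : ∀ᵐ x ∂ν, MvPolynomial.eval x q.leadingCoeff ≠ 0 := by
      have h3 := ih q.leadingCoeff hl
      filter_upwards [measure_eq_zero_iff_ae_notMem.mp h3] with x hx
      simpa using hx
    filter_upwards [hae] with x hx
    have hqx : q.map (MvPolynomial.eval x) ≠ 0 := by
      intro h
      apply hx
      have h2 : (q.map (MvPolynomial.eval x)).coeff q.natDegree = 0 := by rw [h]; simp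
      rw [Polynomial.coeff_map] at h2
      rwa [Polynomial.leadingCoeff]
    have hsec : (Prod.mk x ⁻¹' (Prod.swap ⁻¹' T) : Set ℝ)
        = {t | Polynomial.eval t (q.map (MvPolynomial.eval x)) = 0} := by
      ext t
      simp only [Set.mem_preimage, Prod.swap_prod_mk, hT, Set.mem_setOf_eq]
      rw [MvPolynomial.eval_eq_eval_mv_eval']
    show μ₀ (Prod.mk x ⁻¹' (Prod.swap ⁻¹' T)) = 0
    rw [hsec]
    have hfin : {t : ℝ | Polynomial.eval t (q.map (MvPolynomial.eval x)) = 0}.Finite :=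
      Polynomial.finite_setOf_isRoot hqx
    exact (gaussianReal_absolutelyContinuous 0 one_ne_zero) (hfin.measure_zero volume)

theorem stmt11 {d N : ℕ} (hd : 0 < d) (hdN : d ≤ N)
    (A Q : Matrix (Fin d) (Fin d) ℝ) (lam : Fin d → ℝ) (hQ : IsUnit Q)
    (hA : Aᵀ = Q * Matrix.diagonal lam * Q⁻¹) (hlam : Function.Injective lam)
    (C : Matrix (Fin N) (Fin d) ℝ) (hC : C.rank = d) :
    ∀ᵐ φ ∂(Measure.pi fun _ : Fin N => gaussianReal 0 1),
      IsUnit (Matrix.of fun (k j : Fin d) => Matrix.vecMul φ (C * A ^ (k : ℕ)) j) := by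
  have hQdet : IsUnit Q.det := (Matrix.isUnit_iff_isUnit_det Q).mp hQ
  -- the determinant polynomial
  set M : Matrix (Fin d) (Fin d) (MvPolynomial (Fin N) ℝ) :=
    Matrix.of fun k j => ∑ i, MvPolynomial.C ((C * A ^ (k : ℕ)) i j) * MvPolynomial.X i with hM
  set P : MvPolynomial (Fin N) ℝ := M.det with hP
  have heval : ∀ φ : Fin N → ℝ, MvPolynomial.eval φ P =
      (Matrix.of fun (k j : Fin d) => Matrix.vecMul φ (C * A ^ (k : ℕ)) j).det := by
    intro φ
    rw [hP, RingHom.map_det]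
    congr 1
    ext k j
    simp only [RingHom.mapMatrix_apply, Matrix.map_apply, hM, Matrix.of_apply,
      map_sum, _root_.map_mul, MvPolynomial.eval_C, MvPolynomial.eval_X, Matrix.vecMul,
      dotProduct]
    exact Finset.sum_congr rfl fun i _ => mul_comm _ _
  -- P is nonzero: find a witness
  have hPne : P ≠ 0 := by
    -- surjectivity of φ ↦ φ ᵥ* C
    have hsurj : Function.Surjective (fun φ : Fin N → ℝ => Matrix.vecMul φ C) := by
      have hrange : LinearMap.range (Cᵀ.mulVecLin) = ⊤ := by
        apply Submodule.eq_top_of_finrank_eq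
        have h4 : Cᵀ.rank = d := by rw [Matrix.rank_transpose, hC]
        rw [show Module.finrank ℝ ↥(LinearMap.range Cᵀ.mulVecLin) = Cᵀ.rank from rfl, h4,
          Module.finrank_fin_fun]
      intro r
      obtain ⟨φ, hφ⟩ := LinearMap.range_eq_top.mp hrange r
      refine ⟨φ, ?_⟩
      show φ ᵥ* C = r
      rw [← Matrix.mulVec_transpose, ← Matrix.mulVecLin_apply]
      exact hφ
    obtain ⟨φ₀, hφ₀⟩ := hsurj (Q *ᵥ (fun _ => 1))
    have hφ₀' : φ₀ ᵥ* C = Q *ᵥ (fun _ => 1) := hφ₀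
    -- compute the observability matrix at φ₀
    have hAk : ∀ k : ℕ, (A ^ k)ᵀ = Q * Matrix.diagonal (lam ^ k) * Q⁻¹ := by
      intro k
      rw [Matrix.transpose_pow, hA, ← Matrix.diagonal_pow]
      induction k with
      | zero => simp [Matrix.mul_nonsing_inv Q hQdet]
      | succ k ihk =>
        rw [pow_succ, ihk, pow_succ]
        rw [show Q * Matrix.diagonal lam ^ k * Q⁻¹ * (Q * Matrix.diagonal lam * Q⁻¹)
          = Q * Matrix.diagonal lam ^ k * (Q⁻¹ * Q) * Matrix.diagonal lam * Q⁻¹ by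
            noncomm_ring]
        rw [Matrix.nonsing_inv_mul Q hQdet]
        noncomm_ring
    have hrow : ∀ k : ℕ, Matrix.vecMul φ₀ (C * A ^ k)
        = Q *ᵥ (fun m => lam m ^ k) := by
      intro k
      rw [← Matrix.vecMul_vecMul, hφ₀', ← Matrix.mulVec_transpose, hAk k]
      rw [← Matrix.mulVec_mulVec, ← Matrix.mulVec_mulVec]
      rw [Matrix.mulVec_mulVec (fun _ => (1:ℝ)) Q⁻¹ Q, Matrix.nonsing_inv_mul Q hQdet,
        Matrix.one_mulVec]
      ext m
      simp [Matrix.mulVec, dotProduct, Matrix.mul_diagonal, Pi.pow_apply,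
        Matrix.diagonal_apply, Finset.sum_ite_eq]
    have hOeq : (Matrix.of fun (k j : Fin d) => Matrix.vecMul φ₀ (C * A ^ (k : ℕ)) j)
        = (Matrix.vandermonde lam)ᵀ * Qᵀ := by
      ext k j
      rw [Matrix.of_apply, hrow (k : ℕ)]
      simp only [Matrix.mul_apply, Matrix.transpose_apply, Matrix.vandermonde,
        Matrix.mulVec, dotProduct, Matrix.of_apply]
      exact Finset.sum_congr rfl fun m _ => mul_comm _ _
    intro h
    have h0 : MvPolynomial.eval φ₀ P ≠ 0 := by
      rw [heval φ₀, hOeq, Matrix.det_mul, Matrix.det_transpose, Matrix.det_transpose]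
      exact mul_ne_zero (Matrix.det_vandermonde_ne_zero_iff.mpr hlam) hQdet.ne_zero
    exact h0 (by rw [h, map_zero])
  have hnull := gauss_poly_null N P hPne
  rw [ae_iff]
  refine measure_mono_null ?_ hnull
  intro φ hφ
  simp only [Set.mem_setOf_eq] at hφ ⊢
  by_contra h
  apply hφ
  rw [Matrix.isUnit_iff_isUnit_det, isUnit_iff_ne_zero]
  intro hdet
  exact h (by rw [heval φ]; exact hdet)
end
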